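/- Define Q'_J = {(a,b,c) ∈ W^J_max × W_J × W^J : a ≤ cb} with order (a',b',c') ≤ (a,b,c) iff there exist u'₁, u'₂ ∈ W_J with u'₁u'₂ = b', ℓ(u'₁)+ℓ(u'₂) = ℓ(b'), and ab⁻¹ ≤ a'(u'₂)⁻¹ ≤ c'u'₁ ≤ c. Define Q_J = {(x,y) ∈ W^J × W : y ≤ x} with (x',y') ⪯ (x,y) iff there exists u ∈ W_J with x'u ≤ x and y'u ≥ y. Then the map h: Q_J → Q'_J, (x,y) ↦ (max(yW_J), y⁻¹max(yW_J), x) is an order-preserving bijection. -/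

import Mathlib

/-- The Bruhat order on a Coxeter group, defined via the subword property:
`u ≤ v` iff some reduced word for `v` contains a subword whose product is `u`. -/
def bruhatLE {B W : Type*} [Group W] {M : CoxeterMatrix B} (cs : CoxeterSystem M W)
    (u v : W) : Prop :=
  ∃ l : List B, cs.IsReduced l ∧ cs.wordProd l = v ∧
    ∃ l' : List B, l'.Sublist l ∧ cs.wordProd l' = u

/-- `x` is a minimal length representative of its coset `x W_J`. -/
def isMinRep {B W : Type*} [Group W] {M : CoxeterMatrix B} (cs : CoxeterSystem M W)
    (J : Set B) (x : W) : Prop :=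
  ∀ u ∈ Subgroup.closure (cs.simple '' J), cs.length x ≤ cs.length (x * u)

/-- `x` is a maximal length representative of its coset `x W_J`. -/
def isMaxRep {B W : Type*} [Group W] {M : CoxeterMatrix B} (cs : CoxeterSystem M W)
    (J : Set B) (x : W) : Prop :=
  ∀ u ∈ Subgroup.closure (cs.simple '' J), cs.length (x * u) ≤ cs.length x

/-- `m` is the Bruhat-greatest element of the set `S`. -/
def isGreatestB {B W : Type*} [Group W] {M : CoxeterMatrix B} (cs : CoxeterSystem M W)
    (S : Set W) (m : W) : Prop :=
  m ∈ S ∧ ∀ z ∈ S, bruhatLE cs z m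

/-- The poset `Q_J = {(x,y) ∈ W^J × W : y ≤ x}`. -/
def QJset {B W : Type*} [Group W] {M : CoxeterMatrix B} (cs : CoxeterSystem M W)
    (J : Set B) : Set (W × W) :=
  {p | isMinRep cs J p.1 ∧ bruhatLE cs p.2 p.1}

/-- The order `⪯` on `Q_J`: `(x',y') ⪯ (x,y)` iff `∃ u ∈ W_J, x'u ≤ x ∧ y'u ≥ y`. -/
def preceq {B W : Type*} [Group W] {M : CoxeterMatrix B} (cs : CoxeterSystem M W)
    (J : Set B) (p q : W × W) : Prop :=
  ∃ u ∈ Subgroup.closure (cs.simple '' J),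
    bruhatLE cs (p.1 * u) q.1 ∧ bruhatLE cs q.2 (p.2 * u)

/-- Rietsch's poset `Q'_J = {(a,b,c) ∈ W^J_max × W_J × W^J : a ≤ cb}`. -/
def Q'Jset {B W : Type*} [Group W] {M : CoxeterMatrix B} (cs : CoxeterSystem M W)
    (J : Set B) : Set (W × W × W) :=
  {q | isMaxRep cs J q.1 ∧ q.2.1 ∈ Subgroup.closure (cs.simple '' J) ∧
    isMinRep cs J q.2.2 ∧ bruhatLE cs q.1 (q.2.2 * q.2.1)}

/-- Rietsch's order on `Q'_J`: `(a',b',c') ≤ (a,b,c)` iff there are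
`u'₁, u'₂ ∈ W_J` with `u'₁u'₂ = b'`, `ℓ(u'₁) + ℓ(u'₂) = ℓ(b')` and
`ab⁻¹ ≤ a'(u'₂)⁻¹ ≤ c'u'₁ ≤ c`. -/
def leQ' {B W : Type*} [Group W] {M : CoxeterMatrix B} (cs : CoxeterSystem M W)
    (J : Set B) (q' q : W × W × W) : Prop :=
  ∃ u1 ∈ Subgroup.closure (cs.simple '' J), ∃ u2 ∈ Subgroup.closure (cs.simple '' J),
    u1 * u2 = q'.2.1 ∧ cs.length u1 + cs.length u2 = cs.length q'.2.1 ∧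
    bruhatLE cs (q.1 * q.2.1⁻¹) (q'.1 * u2⁻¹) ∧
    bruhatLE cs (q'.1 * u2⁻¹) (q'.2.2 * u1) ∧
    bruhatLE cs (q'.2.2 * u1) q.2.2

set_option linter.unusedSectionVars false
set_option linter.unusedTactic false
set_option maxHeartbeats 1000000

namespace RietschAux

open List CoxeterSystem

open scoped Classical

variable {B W : Type*} [Group W] {M : CoxeterMatrix B} (cs : CoxeterSystem M W)

local prefix:100 "σ" => cs.simple
local prefix:100 "π" => cs.wordProd
local prefix:100 "ℓ" => cs.length

/-- Mod-2 count of `t` in a list. -/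
noncomputable def cnt (t : W) : List W → ZMod 2
  | [] => 0
  | a :: l => (if a = t then (1 : ZMod 2) else 0) + cnt t l

@[simp] theorem cnt_nil (t : W) : cnt t ([] : List W) = 0 := rfl

theorem cnt_cons (t a : W) (l : List W) :
    cnt t (a :: l) = (if a = t then (1 : ZMod 2) else 0) + cnt t l := rfl

theorem cnt_eq_zero_of_not_mem {t : W} {l : List W} (h : t ∉ l) : cnt t l = 0 := by
  induction l with
  | nil => rfl
  | cons a l ih =>
    rw [cnt_cons, if_neg (by rintro rfl; exact h (mem_cons_self (a := a) (l := l))),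
      ih (fun hc => h (mem_cons_of_mem a hc)), add_zero]

theorem cnt_eq_one_of_mem {t : W} {l : List W} (hd : l.Nodup) (h : t ∈ l) : cnt t l = 1 := by
  induction l with
  | nil => simp at h
  | cons a l ih =>
    rcases mem_cons.mp h with rfl | h'
    · rw [cnt_cons, if_pos rfl, cnt_eq_zero_of_not_mem (nodup_cons.mp hd).1, add_zero]
    · rw [cnt_cons, if_neg (by rintro rfl; exact (nodup_cons.mp hd).1 h'),
        ih (nodup_cons.mp hd).2 h', zero_add]

theorem zmod2_add_self (x : ZMod 2) : x + x = 0 := by revert x; decide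

/-- The permutation of `W × ZMod 2` associated to a simple reflection. -/
noncomputable def fperm (i : B) : Equiv.Perm (W × ZMod 2) :=
  Function.Involutive.toPerm
    (fun p => (σ i * p.1 * σ i, p.2 + if p.1 = σ i then 1 else 0))
    (by
      rintro ⟨t, ε⟩
      have h1 : σ i * (σ i * t * σ i) * σ i = t := by
        calc σ i * (σ i * t * σ i) * σ i = (σ i * σ i) * t * (σ i * σ i) := by group
        _ = t := by rw [cs.simple_mul_simple_self]; group
      have h2 : (σ i * t * σ i = σ i) ↔ (t = σ i) := by
        constructor
        · intro h
          have : σ i * (σ i * t * σ i) * σ i = σ i * σ i * σ i := by rw [h]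
          rw [h1] at this
          rw [this, cs.simple_mul_simple_self]; group
        · rintro rfl; rw [cs.simple_mul_simple_self]; group
      simp only [Prod.mk.injEq, h1, h2]
      refine ⟨trivial, ?_⟩
      rcases em (t = σ i) with h | h <;>
        simp only [if_pos, if_neg, h, if_true, if_false] <;>
        rw [add_assoc, zmod2_add_self, add_zero])

theorem fperm_apply (i : B) (t : W) (ε : ZMod 2) :
    fperm cs i (t, ε) = (σ i * t * σ i, ε + if t = σ i then 1 else 0) := rfl

theorem zmod2_eq_zero_or_one (x : ZMod 2) : x = 0 ∨ x = 1 := by revert x; decide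

section Braid

variable (i j : B)

private theorem sj_r_pow (k : ℕ) : σ j * (σ i * σ j) ^ k = ((σ i * σ j)⁻¹) ^ k * σ j := by
  induction k with
  | zero => simp
  | succ k ih =>
    have key : σ j * (σ i * σ j) = (σ i * σ j)⁻¹ * σ j := by
      rw [mul_inv_rev, cs.inv_simple, cs.inv_simple]; group
    rw [pow_succ, ← mul_assoc, ih, mul_assoc, key, ← mul_assoc, ← pow_succ]

private theorem conj_eq_iff (g a c : W) : g * a * g⁻¹ = c ↔ a = g⁻¹ * c * g := by
  constructor
  · intro h; rw [← h]; group
  · intro h; rw [h]; group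

private theorem conj_sj (k q : ℕ) :
    ((σ i * σ j)⁻¹) ^ k * (σ j * (σ i * σ j) ^ q) * (σ i * σ j) ^ k
      = σ j * (σ i * σ j) ^ (q + 2 * k) := by
  have h : ((σ i * σ j)⁻¹) ^ k * σ j = σ j * (σ i * σ j) ^ k := (sj_r_pow cs i j k).symm
  calc ((σ i * σ j)⁻¹) ^ k * (σ j * (σ i * σ j) ^ q) * (σ i * σ j) ^ k
      = (((σ i * σ j)⁻¹) ^ k * σ j) * ((σ i * σ j) ^ q * (σ i * σ j) ^ k) := by group
    _ = σ j * ((σ i * σ j) ^ k * ((σ i * σ j) ^ q * (σ i * σ j) ^ k)) := by rw [h, mul_assoc]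
    _ = σ j * (σ i * σ j) ^ (k + (q + k)) := by rw [← pow_add, ← pow_add]
    _ = σ j * (σ i * σ j) ^ (q + 2 * k) := by rw [show k + (q+k) = q + 2*k by ring]

private theorem conj_iff (k q : ℕ) (t x : W) (hx : x = (σ i * σ j) ^ k * t * ((σ i * σ j) ^ k)⁻¹) :
    (x = σ j * (σ i * σ j) ^ q) ↔ (t = σ j * (σ i * σ j) ^ (q + 2 * k)) := by
  rw [hx, conj_eq_iff, ← inv_pow, conj_sj cs i j k q]

theorem fperm_pow_apply (k : ℕ) (t : W) (ε : ZMod 2) :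
    ((fperm cs i * fperm cs j) ^ k) (t, ε) =
      ((σ i * σ j) ^ k * t * ((σ i * σ j) ^ k)⁻¹,
        ε + ∑ q ∈ Finset.range (2 * k), (if t = σ j * (σ i * σ j) ^ q then (1 : ZMod 2) else 0)) := by
  induction k with
  | zero => simp
  | succ k ih =>
    rw [pow_succ']
    have happ : ∀ p : W × ZMod 2, ((fperm cs i * fperm cs j) * (fperm cs i * fperm cs j) ^ k) p
        = (fperm cs i) ((fperm cs j) (((fperm cs i * fperm cs j) ^ k) p)) := by
      intro p; rfl
    rw [happ, ih]
    set x : W := (σ i * σ j) ^ k * t * ((σ i * σ j) ^ k)⁻¹ with hx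
    rw [fperm_apply, fperm_apply]
    dsimp only
    have hcond1 : (x = σ j) ↔ (t = σ j * (σ i * σ j) ^ (0 + 2 * k)) := by
      have := conj_iff cs i j k 0 t x hx
      simpa using this
    have hcond2 : (σ j * x * σ j = σ i) ↔ (t = σ j * (σ i * σ j) ^ (1 + 2 * k)) := by
      have base : (σ j * x * σ j = σ i) ↔ (x = σ j * (σ i * σ j) ^ 1) := by
        constructor
        · intro h
          have : σ j * (σ j * x * σ j) * σ j = σ j * σ i * σ j := by rw [h]
          have h2 : σ j * (σ j * x * σ j) * σ j = x := by
            calc σ j * (σ j * x * σ j) * σ j = (σ j * σ j) * x * (σ j * σ j) := by group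
            _ = x := by rw [cs.simple_mul_simple_self]; group
          rw [h2] at this
          rw [this, pow_one]; group
        · intro h; rw [h, pow_one]
          calc σ j * (σ j * (σ i * σ j)) * σ j = (σ j * σ j) * σ i * (σ j * σ j) := by group
          _ = σ i := by rw [cs.simple_mul_simple_self]; group
      rw [base]
      exact conj_iff cs i j k 1 t x hx
    refine Prod.ext ?_ ?_
    ·
      show σ i * (σ j * x * σ j) * σ i = (σ i * σ j) ^ (k+1) * t * ((σ i * σ j) ^ (k+1))⁻¹
      have hinv : ((σ i * σ j) ^ (k+1))⁻¹ = ((σ i * σ j) ^ k)⁻¹ * σ j * σ i := by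
        rw [pow_succ', mul_inv_rev, mul_inv_rev, cs.inv_simple, cs.inv_simple]
        group
      rw [hx, hinv, pow_succ']
      group
    ·
      show ε + ∑ q ∈ Finset.range (2 * k), (if t = σ j * (σ i * σ j) ^ q then (1 : ZMod 2) else 0)
          + (if x = σ j then (1:ZMod 2) else 0) + (if σ j * x * σ j = σ i then (1:ZMod 2) else 0)
        = ε + ∑ q ∈ Finset.range (2 * (k+1)), (if t = σ j * (σ i * σ j) ^ q then (1 : ZMod 2) else 0)
      have e1 : (if x = σ j then (1:ZMod 2) else 0)
          = (if t = σ j * (σ i * σ j) ^ (2*k) then (1:ZMod 2) else 0) := by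
        refine if_congr ?_ rfl rfl; simpa using hcond1
      have e2 : (if σ j * x * σ j = σ i then (1:ZMod 2) else 0)
          = (if t = σ j * (σ i * σ j) ^ (2*k+1) then (1:ZMod 2) else 0) := by
        refine if_congr ?_ rfl rfl
        rw [hcond2]; constructor <;> (intro h; rw [h]; ring_nf)
      rw [e1, e2]
      have : 2 * (k+1) = (2*k) + 1 + 1 := by ring
      rw [this, Finset.sum_range_succ, Finset.sum_range_succ]
      ring

theorem fperm_liftable : M.IsLiftable (fperm cs) := by
  intro i j
  apply Equiv.ext
  rintro ⟨t, ε⟩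
  rw [fperm_pow_apply]
  have hr : (σ i * σ j) ^ M i j = 1 := cs.simple_mul_simple_pow i j
  have hsum : ∑ q ∈ Finset.range (2 * M i j),
      (if t = σ j * (σ i * σ j) ^ q then (1 : ZMod 2) else 0) = 0 := by
    rw [two_mul, Finset.sum_range_add]
    have : ∀ q, (if t = σ j * (σ i * σ j) ^ (M i j + q) then (1 : ZMod 2) else 0)
        = (if t = σ j * (σ i * σ j) ^ q then (1 : ZMod 2) else 0) := by
      intro q; rw [pow_add, hr, one_mul]
    rw [Finset.sum_congr rfl (fun q _ => this q)]
    exact zmod2_add_self _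
  rw [hr, hsum]
  simp

end Braid

/-- The reflection cocycle homomorphism. -/
noncomputable def phi : W →* Equiv.Perm (W × ZMod 2) :=
  cs.lift ⟨fperm cs, fperm_liftable cs⟩

theorem phi_simple (i : B) : phi cs (σ i) = fperm cs i :=
  cs.lift_apply_simple (fperm_liftable cs) i

local prefix:100 "ris" => cs.rightInvSeq

theorem rightInvSeq_cons (i : B) (ω : List B) :
    ris (i :: ω) = ((π ω)⁻¹ * σ i * π ω) :: ris ω := rfl

theorem phi_wordProd (ω : List B) (t : W) (ε : ZMod 2) :
    phi cs (π ω) (t, ε) = (π ω * t * (π ω)⁻¹, ε + cnt t (ris ω)) := by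
  induction ω generalizing ε with
  | nil => simp [cnt_nil]
  | cons i ω ih =>
    rw [cs.wordProd_cons, map_mul, phi_simple, Equiv.Perm.mul_apply, ih, fperm_apply,
      rightInvSeq_cons cs, cnt_cons]
    have hc : (π ω * t * (π ω)⁻¹ = σ i) ↔ ((π ω)⁻¹ * σ i * π ω = t) := by
      rw [conj_eq_iff]
      constructor
      · intro h; rw [h]
      · intro h; rw [← h]
    refine Prod.ext ?_ ?_
    · show σ i * (π ω * t * (π ω)⁻¹) * σ i = σ i * π ω * t * (σ i * π ω)⁻¹
      rw [mul_inv_rev, cs.inv_simple]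
      group
    · show ε + cnt t (ris ω) + (if π ω * t * (π ω)⁻¹ = σ i then (1:ZMod 2) else 0)
        = ε + ((if (π ω)⁻¹ * σ i * π ω = t then (1:ZMod 2) else 0) + cnt t (ris ω))
      rw [if_congr hc rfl rfl]
      ring

/-- The mod-2 reflection-count cocycle. -/
noncomputable def nn (w t : W) : ZMod 2 := (phi cs w (t, 0)).2

theorem phi_apply (w t : W) (ε : ZMod 2) :
    phi cs w (t, ε) = (w * t * w⁻¹, ε + nn cs w t) := by
  obtain ⟨ω, rfl⟩ := cs.wordProd_surjective w
  rw [phi_wordProd, nn, phi_wordProd, zero_add]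

theorem nn_eq_cnt (ω : List B) (t : W) : nn cs (π ω) t = cnt t (ris ω) := by
  rw [nn, phi_wordProd, zero_add]

theorem nn_mul (w v t : W) : nn cs (w * v) t = nn cs v t + nn cs w (v * t * v⁻¹) := by
  have h := phi_apply cs (w * v) t 0
  rw [map_mul, Equiv.Perm.mul_apply, phi_apply, phi_apply] at h
  have h2 := congrArg Prod.snd h
  simp only [zero_add] at h2
  exact h2.symm

theorem nn_one (t : W) : nn cs 1 t = 0 := by
  rw [nn, map_one]; rfl

theorem zmod2_eq_of_add_eq_zero {a b : ZMod 2} (h : a + b = 0) : a = b := by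
  revert a b; decide

theorem nn_inv (w t : W) : nn cs w⁻¹ t = nn cs w (w⁻¹ * t * w) := by
  apply zmod2_eq_of_add_eq_zero
  have h := nn_mul cs w w⁻¹ t
  rw [mul_inv_cancel, nn_one, inv_inv] at h
  exact h.symm

theorem nn_simple (i : B) (t : W) : nn cs (σ i) t = if t = σ i then 1 else 0 := by
  rw [nn, phi_simple, fperm_apply, zero_add]

theorem nn_refl_self {t : W} (ht : cs.IsReflection t) : nn cs t t = 1 := by
  obtain ⟨u, i, rfl⟩ := ht
  have e0 : u * (σ i * u⁻¹) = u * σ i * u⁻¹ := by group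
  have h3 : (σ i * u⁻¹) * (u * σ i * u⁻¹) * (σ i * u⁻¹)⁻¹ = σ i * σ i * σ i := by
    rw [mul_inv_rev, inv_inv, cs.inv_simple]; group
  have h5 : u⁻¹ * (u * σ i * u⁻¹) * u⁻¹⁻¹ = σ i := by group
  have h4 := nn_mul cs (σ i) u⁻¹ (u * σ i * u⁻¹)
  rw [h5, nn_simple, if_pos rfl] at h4
  have h6 : nn cs u⁻¹ (u * σ i * u⁻¹) = nn cs u (σ i) := by
    rw [nn_inv]
    congr 1
    group
  rw [h6] at h4
  have hmul := nn_mul cs u (σ i * u⁻¹) (u * σ i * u⁻¹)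
  rw [e0, h3, cs.simple_mul_simple_self, one_mul, h4] at hmul
  rw [hmul, show nn cs u (σ i) + 1 + nn cs u (σ i)
    = (nn cs u (σ i) + nn cs u (σ i)) + 1 by ring, zmod2_add_self, zero_add]

theorem nn_mul_reflection {t : W} (ht : cs.IsReflection t) (w : W) :
    nn cs (w * t) t = nn cs w t + 1 := by
  have h := nn_mul cs w t t
  rw [h, nn_refl_self cs ht]
  have harg : t * t * t⁻¹ = t := by rw [mul_assoc, mul_inv_cancel, mul_one]
  rw [harg]
  ring

theorem mem_ris_iff_nn {ω : List B} (hω : cs.IsReduced ω) (t : W) :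
    t ∈ ris ω ↔ nn cs (π ω) t = 1 := by
  rw [nn_eq_cnt]
  constructor
  · intro h; exact cnt_eq_one_of_mem (hω.nodup_rightInvSeq) h
  · intro h
    by_contra hc
    rw [cnt_eq_zero_of_not_mem hc] at h
    exact absurd h (by decide)

theorem isRightInversion_iff_nn {t : W} (ht : cs.IsReflection t) (w : W) :
    cs.IsRightInversion w t ↔ nn cs w t = 1 := by
  have hw : w * t * t = w := by rw [mul_assoc, ht.mul_self, mul_one]
  constructor
  · intro h
    obtain ⟨ρ, hρred, hρ⟩ := cs.exists_reduced_word' (w * t)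
    have hnot : t ∉ cs.rightInvSeq ρ := by
      intro hmem
      have hinv2 := (cs.isRightInversion_of_mem_rightInvSeq hρred hmem).2
      rw [← hρ, hw] at hinv2
      have := h.2
      omega
    have h0 : nn cs (w * t) t = 0 := by
      have h1 := nn_eq_cnt cs ρ t
      rw [← hρ] at h1
      rw [h1, cnt_eq_zero_of_not_mem hnot]
    have h2 := nn_mul_reflection cs ht (w * t)
    rw [hw, h0, zero_add] at h2
    exact h2
  · intro h
    obtain ⟨ω, hred, hweq⟩ := cs.exists_reduced_word' w
    rw [hweq] at h ⊢
    exact cs.isRightInversion_of_mem_rightInvSeq hred ((mem_ris_iff_nn cs hred t).mpr h)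

theorem strong_exchange {t w : W} (ht : cs.IsReflection t) (hlt : ℓ (w * t) < ℓ w)
    {ω : List B} (hω : cs.IsReduced ω) (heq : π ω = w) :
    ∃ j < ω.length, π (ω.eraseIdx j) = w * t := by
  have hinv : cs.IsRightInversion w t := ⟨ht, hlt⟩
  have hn : nn cs w t = 1 := (isRightInversion_iff_nn cs ht w).mp hinv
  have hmem : t ∈ ris ω := by
    rw [mem_ris_iff_nn cs hω, heq]; exact hn
  obtain ⟨j, hj, hget⟩ := List.mem_iff_getElem.mp hmem
  rw [cs.length_rightInvSeq] at hj
  refine ⟨j, hj, ?_⟩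
  rw [← heq, ← cs.wordProd_mul_getD_rightInvSeq ω j]
  congr 1
  rw [List.getD_eq_getElem _ 1 (by rw [cs.length_rightInvSeq]; exact hj), hget]

/-! ### Deletion property -/

theorem isReduced_nil : cs.IsReduced ([] : List B) := by
  unfold CoxeterSystem.IsReduced
  simp

theorem exists_reduced_sublist : ∀ (n : ℕ) (l : List B), l.length ≤ n →
    ∃ l', l'.Sublist l ∧ cs.IsReduced l' ∧ π l' = π l := by
  intro n
  induction n with
  | zero =>
    intro l hl
    have : l = [] := List.eq_nil_of_length_eq_zero (Nat.le_zero.mp hl)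
    subst this
    exact ⟨[], List.Sublist.refl _, isReduced_nil cs, rfl⟩
  | succ n ih =>
    intro l hl
    by_cases hred : cs.IsReduced l
    · exact ⟨l, List.Sublist.refl l, hred, rfl⟩
    · have hne : ∃ k, ¬ cs.IsReduced (l.take k) := ⟨l.length, by rwa [List.take_length]⟩
      have hk0spec : ¬ cs.IsReduced (l.take (Nat.find hne)) := Nat.find_spec hne
      have hk0min : ∀ m, m < Nat.find hne → cs.IsReduced (l.take m) := by
        intro m hm
        have := Nat.find_min hne hm
        tauto
      have hk0pos : 0 < Nat.find hne := by
        rcases Nat.eq_zero_or_pos (Nat.find hne) with h0 | h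
        · exfalso
          apply hk0spec
          rw [h0, List.take_zero]
          exact isReduced_nil cs
        · exact h
      have hk0le : Nat.find hne ≤ l.length := by
        by_contra hgt
        push_neg at hgt
        apply hred
        have := hk0min l.length hgt
        rwa [List.take_length] at this
      set k := Nat.find hne - 1 with hkdef
      have hkk : k + 1 = Nat.find hne := Nat.succ_pred_eq_of_pos hk0pos
      have hklt : k < l.length := by omega
      have hredk : cs.IsReduced (l.take k) := hk0min k (by omega)
      have htake : l.take (k+1) = l.take k ++ [l[k]'hklt] := by
        rw [List.take_succ, List.getElem?_eq_getElem hklt]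
        rfl
      have hlenk : ℓ (π (l.take k)) = k := by
        have h1 : ℓ (π (l.take k)) = (l.take k).length := hredk
        rwa [List.length_take, min_eq_left hklt.le] at h1
      have hdesc : ℓ (π (l.take k) * σ (l[k]'hklt)) < ℓ (π (l.take k)) := by
        rcases cs.length_mul_simple (π (l.take k)) (l[k]'hklt) with hup | hdn
        · exfalso
          apply hk0spec
          rw [← hkk]
          unfold CoxeterSystem.IsReduced
          rw [htake, cs.wordProd_append, cs.wordProd_singleton, hup, hlenk,
            List.length_append, List.length_take, min_eq_left hklt.le]
          rfl
        · omega
      obtain ⟨jj, hjj, hjprod⟩ :=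
        strong_exchange cs (cs.isReflection_simple (l[k]'hklt)) hdesc hredk rfl
      have hl2prod : π ((l.take k).eraseIdx jj ++ l.drop (k+1)) = π l := by
        rw [cs.wordProd_append, hjprod, ← cs.wordProd_singleton,
          ← cs.wordProd_append, ← htake, ← cs.wordProd_append, List.take_append_drop]
      have hl2sub : ((l.take k).eraseIdx jj ++ l.drop (k+1)).Sublist l := by
        have h1 : ((l.take k).eraseIdx jj).Sublist (l.take (k+1)) := by
          refine (List.eraseIdx_sublist _ jj).trans ?_
          rw [htake]
          exact List.sublist_append_left _ _
        have h2 := List.Sublist.append h1 (List.Sublist.refl (l.drop (k+1)))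
        rwa [List.take_append_drop] at h2
      have hl2len : ((l.take k).eraseIdx jj ++ l.drop (k+1)).length ≤ n := by
        have e1 : ((l.take k).eraseIdx jj).length + 1 = (l.take k).length :=
          List.length_eraseIdx_add_one hjj
        have e2 : (l.take k).length = k := by rw [List.length_take]; omega
        have e3 : (l.drop (k+1)).length = l.length - (k+1) := List.length_drop
        rw [List.length_append]
        omega
      obtain ⟨l', hs, hr, hp⟩ := ih _ hl2len
      exact ⟨l', hs.trans hl2sub, hr, by rw [hp, hl2prod]⟩

theorem exists_reduced_sublist' (l : List B) :
    ∃ l', l'.Sublist l ∧ cs.IsReduced l' ∧ π l' = π l :=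
  exists_reduced_sublist cs l.length l le_rfl

/-! ### The Bruhat order as a chain relation -/

/-- One step in the Bruhat order. -/
def bstep (u v : W) : Prop := ∃ t, cs.IsReflection t ∧ v = u * t ∧ ℓ u < ℓ v

/-- The Bruhat order (chain formulation). -/
def ble : W → W → Prop := Relation.ReflTransGen (bstep cs)

theorem ble_refl (w : W) : ble cs w w := Relation.ReflTransGen.refl

theorem ble_trans {u v w : W} (h1 : ble cs u v) (h2 : ble cs v w) : ble cs u w :=
  Relation.ReflTransGen.trans h1 h2

theorem ble_of_bstep {u v : W} (h : bstep cs u v) : ble cs u v :=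
  Relation.ReflTransGen.single h

theorem ble_length_le {u v : W} (h : ble cs u v) : ℓ u ≤ ℓ v := by
  induction h with
  | refl => exact le_rfl
  | tail _ hstep ih =>
    obtain ⟨t, _, rfl, hlt⟩ := hstep
    omega

theorem ble_eq_or_length_lt {u v : W} (h : ble cs u v) : u = v ∨ ℓ u < ℓ v := by
  induction h with
  | refl => exact Or.inl rfl
  | tail hab hstep ih =>
    obtain ⟨t, _, rfl, hlt⟩ := hstep
    right
    rcases ih with rfl | hlt2 <;> omega

theorem ble_antisymm {u v : W} (h1 : ble cs u v) (h2 : ble cs v u) : u = v := by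
  rcases ble_eq_or_length_lt cs h1 with h | h
  · exact h
  · have := ble_length_le cs h2
    omega

theorem bstep_mul_left {t w : W} (ht : cs.IsReflection t) (hlt : ℓ w < ℓ (t * w)) :
    bstep cs w (t * w) := by
  refine ⟨w⁻¹ * t * w, ?_, ?_, ?_⟩
  · have := ht.conj w⁻¹
    rwa [inv_inv] at this
  · group
  · exact hlt

theorem ble_inv {u v : W} (h : ble cs u v) : ble cs u⁻¹ v⁻¹ := by
  induction h with
  | refl => exact ble_refl cs _
  | @tail b c hab hstep ih =>
    obtain ⟨t, ht, rfl, hlt⟩ := hstep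
    refine ih.tail ⟨b * t * b⁻¹, ht.conj _, ?_, ?_⟩
    · rw [mul_inv_rev, ht.inv]
      group
    · rw [cs.length_inv, cs.length_inv]
      exact hlt

theorem ble_simple_dichotomy {u v : W} (h : ble cs u v) (i : B) :
    ble cs (σ i * u) v ∨ ble cs (σ i * u) (σ i * v) := by
  induction h with
  | refl => exact Or.inr (ble_refl cs _)
  | @tail z y hz hstep ih =>
    obtain ⟨t, ht, rfl, hlt⟩ := hstep
    rcases ih with h1 | h2
    · exact Or.inl (h1.tail ⟨t, ht, rfl, hlt⟩)
    · rcases cs.length_simple_mul z i with hasc | hdesc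
      · -- ℓ (σ i * z) = ℓ z + 1
        by_cases hyy : ℓ (σ i * z) < ℓ (σ i * (z * t))
        · refine Or.inr (h2.tail ⟨t, ht, ?_, hyy⟩)
          rw [mul_assoc]
        · -- descent: strong exchange on the word i :: ρz
          obtain ⟨ρ, hρred, hρeq⟩ := cs.exists_reduced_word' z
          have hiρred : cs.IsReduced (i :: ρ) := by
            unfold CoxeterSystem.IsReduced
            rw [cs.wordProd_cons, ← hρeq, hasc, List.length_cons]
            have : ℓ z = ρ.length := by rw [hρeq]; exact hρred
            omega
          have hiρeq : π (i :: ρ) = σ i * z := by rw [cs.wordProd_cons, ← hρeq]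
          have ht2 : ℓ ((σ i * z) * t) < ℓ (σ i * z) := by
            have hne : ℓ ((σ i * z) * t) ≠ ℓ (σ i * z) := ht.length_mul_left_ne _
            rw [mul_assoc] at hne ⊢
            omega
          obtain ⟨jj, hjj, hjprod⟩ := strong_exchange cs ht ht2 hiρred hiρeq
          rcases jj with _ | j'
          · -- erased the first letter: σ i * (z * t) = z
            rw [List.eraseIdx_cons_zero, ← hρeq] at hjprod
            -- hjprod : z = σ i * z * t
            have hyz : z * t = σ i * z := by
              have h0 : σ i * z = σ i * (σ i * z * t) := by rw [← hjprod]
              rw [← mul_assoc, ← mul_assoc, cs.simple_mul_simple_self, one_mul] at h0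
              exact h0.symm
            rw [← hyz] at h2
            exact Or.inl h2
          · -- impossible: ℓ (z*t) too small
            exfalso
            rw [List.eraseIdx_cons_succ, cs.wordProd_cons] at hjprod
            have hcancel : z * t = π (ρ.eraseIdx j') := by
              have := hjprod
              rw [mul_assoc] at this
              exact (mul_left_cancel this.symm)
            have hlen1 : ℓ (z * t) ≤ (ρ.eraseIdx j').length := by
              rw [hcancel]; exact cs.length_wordProd_le _
            have hj'lt : j' < ρ.length := by
              have := hjj
              simp only [List.length_cons] at this
              omega
            have hlen2 : (ρ.eraseIdx j').length + 1 = ρ.length :=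
              List.length_eraseIdx_add_one hj'lt
            have hzred : ℓ z = ρ.length := by rw [hρeq]; exact hρred
            omega
      · -- ℓ (σ i * z) + 1 = ℓ z : go through z
        have hz2 : ble cs (σ i * u) z := by
          refine h2.tail ?_
          have := bstep_mul_left cs (cs.isReflection_simple i) (w := σ i * z) ?_
          · rwa [cs.simple_mul_simple_cancel_left] at this
          · rw [cs.simple_mul_simple_cancel_left]
            omega
        exact Or.inl (hz2.tail ⟨t, ht, rfl, hlt⟩)

theorem ble_mul_simple_left {u v : W} (h : ble cs u v) (i : B) (hasc : ℓ v < ℓ (σ i * v)) :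
    ble cs (σ i * u) (σ i * v) := by
  rcases ble_simple_dichotomy cs h i with h1 | h2
  · exact h1.trans (ble_of_bstep cs (bstep_mul_left cs (cs.isReflection_simple i) hasc))
  · exact h2

theorem ble_simple_dichotomy_right {u v : W} (h : ble cs u v) (i : B) :
    ble cs (u * σ i) v ∨ ble cs (u * σ i) (v * σ i) := by
  have h1 := ble_inv cs h
  have e : ∀ w : W, σ i * w⁻¹ = (w * σ i)⁻¹ := by
    intro w; rw [mul_inv_rev, cs.inv_simple]
  rcases ble_simple_dichotomy cs h1 i with h2 | h2
  · left
    have := ble_inv cs h2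
    rwa [e, inv_inv, inv_inv] at this
  · right
    have := ble_inv cs h2
    rwa [e, e, inv_inv, inv_inv] at this

theorem ble_mul_simple_right {u v : W} (h : ble cs u v) (i : B) (hasc : ℓ v < ℓ (v * σ i)) :
    ble cs (u * σ i) (v * σ i) := by
  rcases ble_simple_dichotomy_right cs h i with h1 | h2
  · refine h1.trans (ble_of_bstep cs ⟨σ i, cs.isReflection_simple i, rfl, hasc⟩)
  · exact h2

theorem ble_lifting_i {u v : W} (h : ble cs u v) (i : B) (hdesc : ℓ (v * σ i) < ℓ v) :
    ble cs (u * σ i) v := by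
  rcases ble_simple_dichotomy_right cs h i with h1 | h2
  · exact h1
  · refine h2.trans (ble_of_bstep cs ⟨σ i, cs.isReflection_simple i, ?_, ?_⟩)
    · rw [mul_assoc, cs.simple_mul_simple_self, mul_one]
    · exact hdesc

/-! ### Equivalence with the subword definition -/

theorem ble_of_subword : ∀ {ω : List B}, cs.IsReduced ω →
    ∀ {l' : List B}, l'.Sublist ω → ble cs (π l') (π ω) := by
  intro ω
  induction ω with
  | nil =>
    intro _ l' hs
    rw [List.sublist_nil.mp hs]
    exact ble_refl cs _
  | cons i ω ih =>
    intro hred l' hs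
    have hωred : cs.IsReduced ω := by
      have := CoxeterSystem.IsReduced.drop hred (j := 1)
      simpa using this
    have hlen : ℓ (π ω) = ω.length := hωred
    have hlenc : ℓ (π (i :: ω)) = ω.length + 1 := by
      have : ℓ (π (i :: ω)) = (i :: ω).length := hred
      simpa using this
    have hasc : ℓ (π ω) < ℓ (σ i * π ω) := by
      rw [← cs.wordProd_cons]
      omega
    rcases List.sublist_cons_iff.mp hs with h1 | ⟨m, rfl, hm⟩
    · have hb := ih hωred h1
      rw [cs.wordProd_cons]
      exact hb.trans (ble_of_bstep cs (bstep_mul_left cs (cs.isReflection_simple i) hasc))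
    · have hb := ih hωred hm
      rw [cs.wordProd_cons, cs.wordProd_cons]
      exact ble_mul_simple_left cs hb i hasc

theorem subword_of_ble {u v : W} (h : ble cs u v) :
    ∀ ω : List B, cs.IsReduced ω → π ω = v →
      ∃ l', l'.Sublist ω ∧ cs.IsReduced l' ∧ π l' = u := by
  induction h using Relation.ReflTransGen.head_induction_on with
  | refl => exact fun ω hred heq => ⟨ω, List.Sublist.refl ω, hred, heq⟩
  | @head a c hstep hrest ih =>
    intro ω hred heq
    obtain ⟨l₁, hs1, hr1, hp1⟩ := ih ω hred heq
    obtain ⟨t, ht, hceq, hlt⟩ := hstep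
    have hat : c * t = a := by rw [hceq, mul_assoc, ht.mul_self, mul_one]
    have hlt2 : ℓ (π l₁ * t) < ℓ (π l₁) := by
      rw [hp1, hat]
      exact hlt
    obtain ⟨jj, hjj, hjp⟩ := strong_exchange cs ht hlt2 hr1 rfl
    obtain ⟨l', hs2, hr2, hp2⟩ := exists_reduced_sublist' cs (l₁.eraseIdx jj)
    refine ⟨l', hs2.trans ((List.eraseIdx_sublist _ _).trans hs1), hr2, ?_⟩
    rw [hp2, hjp, hp1, hat]

theorem ble_lifting_ii {u v : W} (h : ble cs u v) (i : B)
    (hu : ℓ (u * σ i) < ℓ u) (hv : ℓ (v * σ i) < ℓ v) :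
    ble cs (u * σ i) (v * σ i) := by
  obtain ⟨ρ, hρred, hρeq⟩ := cs.exists_reduced_word' (v * σ i)
  have hρlen : ℓ (v * σ i) = ρ.length := by rw [hρeq]; exact hρred
  have hveq : π (ρ ++ [i]) = v := by
    rw [cs.wordProd_append, cs.wordProd_singleton, ← hρeq, mul_assoc,
      cs.simple_mul_simple_self, mul_one]
  have hωred : cs.IsReduced (ρ ++ [i]) := by
    rcases cs.length_mul_simple v i with hd | hd
    · omega
    · unfold CoxeterSystem.IsReduced
      rw [hveq, List.length_append, List.length_singleton]
      omega
  obtain ⟨l', hsub, hred', hprod⟩ := subword_of_ble cs h (ρ ++ [i]) hωred hveq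
  rcases List.sublist_append_iff.mp hsub with ⟨l₁, l₂, rfl, hs1, hs2⟩
  rcases l₂ with _ | ⟨b, l₂⟩
  · -- l₂ = [] : u = π l₁ ≤ π ρ = v * σ i
    rw [List.append_nil] at hprod
    have h1 : ble cs u (v * σ i) := by
      rw [← hprod, hρeq]
      exact ble_of_subword cs hρred hs1
    refine (ble_of_bstep cs ⟨σ i, cs.isReflection_simple i, ?_, hu⟩ :
      ble cs (u * σ i) u).trans h1
    rw [mul_assoc, cs.simple_mul_simple_self, mul_one]
  · -- l₂ = [i] : u * σ i = π l₁ ≤ π ρ = v * σ i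
    have hb : b = i ∧ l₂ = [] := by
      constructor
      · have hmem := hs2.subset (List.mem_cons_self (a := b) (l := l₂))
        simpa using hmem
      · have hlen2 := hs2.length_le
        simp only [List.length_cons, List.length_nil] at hlen2
        exact List.eq_nil_of_length_eq_zero (by omega)
    have key : l₁ ++ b :: l₂ = l₁ ++ [i] := by rw [hb.1, hb.2]
    rw [key] at hprod
    have h1 : u * σ i = π l₁ := by
      rw [← hprod, cs.wordProd_append, cs.wordProd_singleton, mul_assoc,
        cs.simple_mul_simple_self, mul_one]
    rw [h1, hρeq]
    exact ble_of_subword cs hρred hs1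

theorem one_ble (w : W) : ble cs 1 w := by
  obtain ⟨ω, hred, rfl⟩ := cs.exists_reduced_word' w
  have := ble_of_subword cs hred (List.nil_sublist ω)
  simpa using this

theorem bruhatLE_iff_ble {u v : W} : bruhatLE cs u v ↔ ble cs u v := by
  constructor
  · rintro ⟨l, hred, rfl, l', hsub, rfl⟩
    exact ble_of_subword cs hred hsub
  · intro h
    obtain ⟨ω, hred, rfl⟩ := cs.exists_reduced_word' v
    obtain ⟨l', hs, _, hp⟩ := subword_of_ble cs h ω hred rfl
    exact ⟨ω, hred, rfl, l', hs, hp⟩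

/-! ### Parabolic subgroups -/

section Parabolic

variable (J : Set B)

theorem wordJ_mem {μ : List B} (hμ : ∀ b ∈ μ, b ∈ J) :
    π μ ∈ Subgroup.closure (cs.simple '' J) := by
  induction μ with
  | nil => rw [cs.wordProd_nil]; exact one_mem _
  | cons i μ ih =>
    rw [cs.wordProd_cons]
    exact mul_mem (Subgroup.subset_closure ⟨i, hμ i (List.mem_cons_self (a := i) (l := μ)), rfl⟩)
      (ih fun b hb => hμ b (List.mem_cons_of_mem _ hb))

theorem mem_exists_wordJ {w : W} (hw : w ∈ Subgroup.closure (cs.simple '' J)) :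
    ∃ μ : List B, (∀ b ∈ μ, b ∈ J) ∧ π μ = w := by
  induction hw using Subgroup.closure_induction with
  | mem x hx =>
    obtain ⟨i, hiJ, rfl⟩ := hx
    exact ⟨[i], by simpa using hiJ, cs.wordProd_singleton i⟩
  | one => exact ⟨[], by simp, cs.wordProd_nil⟩
  | mul x y _ _ ihx ihy =>
    obtain ⟨μ₁, h1, rfl⟩ := ihx
    obtain ⟨μ₂, h2, rfl⟩ := ihy
    refine ⟨μ₁ ++ μ₂, ?_, cs.wordProd_append μ₁ μ₂⟩
    intro b hb
    rcases List.mem_append.mp hb with h | h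
    · exact h1 b h
    · exact h2 b h
  | inv x _ ih =>
    obtain ⟨μ, h1, rfl⟩ := ih
    exact ⟨μ.reverse, fun b hb => h1 b (List.mem_reverse.mp hb), cs.wordProd_reverse μ⟩

theorem mem_exists_reduced_wordJ {w : W} (hw : w ∈ Subgroup.closure (cs.simple '' J)) :
    ∃ μ : List B, (∀ b ∈ μ, b ∈ J) ∧ cs.IsReduced μ ∧ π μ = w := by
  obtain ⟨μ, hJ, rfl⟩ := mem_exists_wordJ cs J hw
  obtain ⟨μ', hs, hr, hp⟩ := exists_reduced_sublist' cs μ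
  exact ⟨μ', fun b hb => hJ b (hs.subset hb), hr, hp⟩

theorem minRep_mul_wordProd {x : W} (hx : isMinRep cs J x) :
    ∀ μ : List B, (∀ b ∈ μ, b ∈ J) → cs.IsReduced μ → ℓ (x * π μ) = ℓ x + μ.length := by
  intro μ
  induction μ using List.reverseRecOn with
  | nil => intro _ _; simp
  | append_singleton ν j ih =>
    intro hJ hred
    have hνJ : ∀ b ∈ ν, b ∈ J := fun b hb => hJ b (by simp [hb])
    have hjJ : j ∈ J := hJ j (by simp)
    have hνred : cs.IsReduced ν := by
      have := CoxeterSystem.IsReduced.take hred (j := ν.length)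
      rwa [List.take_left] at this
    have ihν := ih hνJ hνred
    rw [cs.wordProd_append, cs.wordProd_singleton, ← mul_assoc, List.length_append,
      List.length_singleton]
    rcases cs.length_mul_simple (x * π ν) j with hup | hdn
    · rw [hup, ihν, add_assoc]
    · exfalso
      obtain ⟨ρ, hρred, hρeq⟩ := cs.exists_reduced_word' x
      have hρlen : ρ.length = ℓ x := by
        have h1 : ℓ (π ρ) = ρ.length := hρred
        rw [← hρeq] at h1
        exact h1.symm
      have happ : π (ρ ++ ν) = x * π ν := by rw [cs.wordProd_append, ← hρeq]
      have happred : cs.IsReduced (ρ ++ ν) := by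
        unfold CoxeterSystem.IsReduced
        rw [happ, ihν, List.length_append]
        omega
      have hdesc : ℓ ((x * π ν) * σ j) < ℓ (x * π ν) := by omega
      obtain ⟨k, hk, hkprod⟩ :=
        strong_exchange cs (cs.isReflection_simple j) hdesc happred happ
      rw [List.length_append] at hk
      rcases Nat.lt_or_ge k ρ.length with hkρ | hkν
      · rw [List.eraseIdx_append_of_lt_length hkρ, cs.wordProd_append] at hkprod
        have hxu : π (ρ.eraseIdx k) = x * (π ν * σ j * (π ν)⁻¹) := by
          calc π (ρ.eraseIdx k) = (π (ρ.eraseIdx k) * π ν) * (π ν)⁻¹ := by group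
          _ = (x * π ν * σ j) * (π ν)⁻¹ := by rw [hkprod]
          _ = x * (π ν * σ j * (π ν)⁻¹) := by group
        have humem : π ν * σ j * (π ν)⁻¹ ∈ Subgroup.closure (cs.simple '' J) :=
          mul_mem (mul_mem (wordJ_mem cs J hνJ)
            (Subgroup.subset_closure ⟨j, hjJ, rfl⟩)) (inv_mem (wordJ_mem cs J hνJ))
        have hmin := hx _ humem
        have hle : ℓ (x * (π ν * σ j * (π ν)⁻¹)) ≤ (ρ.eraseIdx k).length := by
          rw [← hxu]; exact cs.length_wordProd_le _
        have herase : (ρ.eraseIdx k).length + 1 = ρ.length := List.length_eraseIdx_add_one hkρ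
        omega
      · rw [List.eraseIdx_append_of_length_le hkν, cs.wordProd_append, ← hρeq] at hkprod
        have hcan : π (ν.eraseIdx (k - ρ.length)) = π ν * σ j := by
          have := hkprod
          rw [mul_assoc] at this
          exact mul_left_cancel this
        have hklt2 : k - ρ.length < ν.length := by omega
        have herase : (ν.eraseIdx (k - ρ.length)).length + 1 = ν.length :=
          List.length_eraseIdx_add_one hklt2
        have hle : ℓ (π ν * σ j) ≤ (ν.eraseIdx (k - ρ.length)).length := by
          rw [← hcan]; exact cs.length_wordProd_le _
        have hmm : ℓ (π ν * σ j) = ν.length + 1 := by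
          have h1 : ℓ (π (ν ++ [j])) = (ν ++ [j]).length := hred
          rwa [cs.wordProd_append, cs.wordProd_singleton, List.length_append,
            List.length_singleton] at h1
        omega

theorem minRep_mul_length {x u : W} (hx : isMinRep cs J x)
    (hu : u ∈ Subgroup.closure (cs.simple '' J)) : ℓ (x * u) = ℓ x + ℓ u := by
  obtain ⟨μ, hJ, hred, rfl⟩ := mem_exists_reduced_wordJ cs J hu
  rw [minRep_mul_wordProd cs J hx μ hJ hred]
  congr 1
  exact hred.symm

theorem exists_minRep_decomp (w : W) :
    ∃ x u, isMinRep cs J x ∧ u ∈ Subgroup.closure (cs.simple '' J) ∧ w = x * u := by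
  have hne : ∃ n, ∃ u ∈ Subgroup.closure (cs.simple '' J), ℓ (w * u) = n :=
    ⟨ℓ (w * 1), 1, one_mem _, rfl⟩
  obtain ⟨u₀, hu₀, hlen₀⟩ := Nat.find_spec hne
  refine ⟨w * u₀, u₀⁻¹, ?_, inv_mem hu₀, by group⟩
  intro v hv
  have h1 : ℓ (w * u₀ * v) = ℓ (w * (u₀ * v)) := by rw [mul_assoc]
  have h2 : Nat.find hne ≤ ℓ (w * (u₀ * v)) :=
    Nat.find_min' hne ⟨u₀ * v, mul_mem hu₀ hv, rfl⟩
  omega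

theorem ble_longest_aux {v0 : W} (hv0 : v0 ∈ Subgroup.closure (cs.simple '' J))
    (hmax : ∀ u ∈ Subgroup.closure (cs.simple '' J), ℓ u ≤ ℓ v0) :
    ∀ n u, u ∈ Subgroup.closure (cs.simple '' J) → ℓ u ≤ n → ble cs u v0 := by
  intro n
  induction n with
  | zero =>
    intro u _ hu0
    have : u = 1 := cs.length_eq_zero_iff.mp (Nat.le_zero.mp hu0)
    subst this
    exact one_ble cs v0
  | succ n ih =>
    intro u hu hun
    rcases Nat.lt_or_ge (ℓ u) (n+1) with hlt | hge
    · exact ih u hu (by omega)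
    · obtain ⟨μ, hJ, hred, rfl⟩ := mem_exists_reduced_wordJ cs J hu
      rcases List.eq_nil_or_concat μ with rfl | ⟨ν, j, rfl⟩
      · rw [cs.wordProd_nil]
        exact one_ble cs v0
      · rw [List.concat_eq_append] at *
        have hνJ : ∀ b ∈ ν, b ∈ J := fun b hb => hJ b (by simp [hb])
        have hjJ : j ∈ J := hJ j (by simp)
        have hνred : cs.IsReduced ν := by
          have := CoxeterSystem.IsReduced.take hred (j := ν.length)
          rwa [List.take_left] at this
        have hν_mem := wordJ_mem cs J hνJ
        have hlenν : ℓ (π ν) = ν.length := hνred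
        have hlenμ : ℓ (π (ν ++ [j])) = ν.length + 1 := by
          have h1 : ℓ (π (ν ++ [j])) = (ν ++ [j]).length := hred
          rwa [List.length_append, List.length_singleton] at h1
        have hb1 : ble cs (π ν) v0 := ih (π ν) hν_mem (by omega)
        have hdesc : ℓ (v0 * σ j) < ℓ v0 := by
          have h1 : ℓ (v0 * σ j) ≤ ℓ v0 :=
            hmax _ (mul_mem hv0 (Subgroup.subset_closure ⟨j, hjJ, rfl⟩))
          have h2 : ℓ (v0 * σ j) ≠ ℓ v0 := cs.length_mul_simple_ne v0 j
          omega
        have := ble_lifting_i cs hb1 j hdesc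
        rwa [← cs.wordProd_singleton, ← cs.wordProd_append] at this

theorem ble_longest {v0 : W} (hv0 : v0 ∈ Subgroup.closure (cs.simple '' J))
    (hmax : ∀ u ∈ Subgroup.closure (cs.simple '' J), ℓ u ≤ ℓ v0)
    {u : W} (hu : u ∈ Subgroup.closure (cs.simple '' J)) : ble cs u v0 :=
  ble_longest_aux cs J hv0 hmax (ℓ u) u hu le_rfl

/-! ### Inversion sets and the longest element -/

/-- The set of right inversions. -/
def invSet (w : W) : Set W := {t | cs.IsRightInversion w t}

theorem invSet_eq_ris {ω : List B} (hω : cs.IsReduced ω) :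
    invSet cs (π ω) = {t | t ∈ cs.rightInvSeq ω} := by
  ext t
  constructor
  · intro h
    exact (mem_ris_iff_nn cs hω t).mpr ((isRightInversion_iff_nn cs h.1 _).mp h)
  · intro h
    exact cs.isRightInversion_of_mem_rightInvSeq hω h

theorem length_eq_ncard_invSet (w : W) : ℓ w = (invSet cs w).ncard := by
  obtain ⟨ω, hred, rfl⟩ := cs.exists_reduced_word' w
  rw [invSet_eq_ris cs hred]
  have h1 : {t | t ∈ cs.rightInvSeq ω} = ((cs.rightInvSeq ω).toFinset : Set W) := by
    ext t; simp
  rw [h1, Set.ncard_coe_finset, List.toFinset_card_of_nodup hred.nodup_rightInvSeq,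
    cs.length_rightInvSeq]
  exact hred

theorem ris_subset_WJ {μ : List B} (hμ : ∀ b ∈ μ, b ∈ J) :
    ∀ t ∈ cs.rightInvSeq μ, t ∈ Subgroup.closure (cs.simple '' J) := by
  induction μ with
  | nil => intro t ht; simp at ht
  | cons i μ ih =>
    intro t ht
    rw [rightInvSeq_cons] at ht
    rcases List.mem_cons.mp ht with rfl | h
    · have hm := wordJ_mem cs J (fun b hb => hμ b (List.mem_cons_of_mem _ hb))
      exact mul_mem (mul_mem (inv_mem hm)
        (Subgroup.subset_closure ⟨i, hμ i (List.mem_cons_self (a := i) (l := μ)), rfl⟩)) hm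
    · exact ih (fun b hb => hμ b (List.mem_cons_of_mem _ hb)) t h

theorem invSet_subset_TJ {u : W} (hu : u ∈ Subgroup.closure (cs.simple '' J)) :
    invSet cs u ⊆ {t | cs.IsReflection t ∧ t ∈ Subgroup.closure (cs.simple '' J)} := by
  obtain ⟨μ, hJ, hred, rfl⟩ := mem_exists_reduced_wordJ cs J hu
  rw [invSet_eq_ris cs hred]
  intro t ht
  exact ⟨cs.isReflection_of_mem_rightInvSeq μ ht, ris_subset_WJ cs J hJ t ht⟩

theorem TJ_subset_invSet_longest {v0 : W} (hv0 : v0 ∈ Subgroup.closure (cs.simple '' J))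
    (hmax : ∀ u ∈ Subgroup.closure (cs.simple '' J), ℓ u ≤ ℓ v0) {t : W}
    (ht : cs.IsReflection t ∧ t ∈ Subgroup.closure (cs.simple '' J)) :
    cs.IsRightInversion v0 t := by
  refine ⟨ht.1, ?_⟩
  have h1 : ℓ (v0 * t) ≤ ℓ v0 := hmax _ (mul_mem hv0 ht.2)
  have h2 : ℓ (v0 * t) ≠ ℓ v0 := ht.1.length_mul_left_ne v0
  omega

theorem invSet_longest_mul {v0 : W} (hv0 : v0 ∈ Subgroup.closure (cs.simple '' J))
    (hmax : ∀ u ∈ Subgroup.closure (cs.simple '' J), ℓ u ≤ ℓ v0)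
    {u : W} (hu : u ∈ Subgroup.closure (cs.simple '' J)) :
    invSet cs (v0 * u) =
      {t | cs.IsReflection t ∧ t ∈ Subgroup.closure (cs.simple '' J)} \ invSet cs u := by
  ext t
  constructor
  · intro h
    have htj := invSet_subset_TJ cs J (mul_mem hv0 hu) h
    refine ⟨htj, ?_⟩
    intro hc
    have h1 : nn cs (v0 * u) t = 1 := (isRightInversion_iff_nn cs h.1 _).mp h
    have h2 : nn cs u t = 1 := (isRightInversion_iff_nn cs hc.1 _).mp hc
    have h3 : nn cs v0 (u * t * u⁻¹) = 1 := by
      refine (isRightInversion_iff_nn cs (h.1.conj u) _).mp ?_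
      exact TJ_subset_invSet_longest cs J hv0 hmax
        ⟨h.1.conj u, mul_mem (mul_mem hu htj.2) (inv_mem hu)⟩
    rw [nn_mul, h2, h3] at h1
    exact absurd h1 (by decide)
  · rintro ⟨⟨htr, htw⟩, hnot⟩
    have h2 : nn cs u t = 0 := by
      rcases zmod2_eq_zero_or_one (nn cs u t) with h | h
      · exact h
      · exact absurd ((isRightInversion_iff_nn cs htr u).mpr h) hnot
    have h3 : nn cs v0 (u * t * u⁻¹) = 1 := by
      refine (isRightInversion_iff_nn cs (htr.conj u) _).mp ?_
      exact TJ_subset_invSet_longest cs J hv0 hmax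
        ⟨htr.conj u, mul_mem (mul_mem hu htw) (inv_mem hu)⟩
    refine (isRightInversion_iff_nn cs htr _).mpr ?_
    rw [nn_mul, h2, h3, zero_add]

theorem invSet_one : invSet cs (1 : W) = ∅ := by
  ext t
  simp only [invSet, Set.mem_setOf_eq, Set.mem_empty_iff_false, iff_false]
  intro h
  have := h.2
  simp at this

theorem invSet_longest {v0 : W} (hv0 : v0 ∈ Subgroup.closure (cs.simple '' J))
    (hmax : ∀ u ∈ Subgroup.closure (cs.simple '' J), ℓ u ≤ ℓ v0) :
    invSet cs v0 = {t | cs.IsReflection t ∧ t ∈ Subgroup.closure (cs.simple '' J)} := by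
  have := invSet_longest_mul cs J hv0 hmax (one_mem _)
  rwa [mul_one, invSet_one, Set.diff_empty] at this

theorem length_longest_mul [Finite W] {v0 : W}
    (hv0 : v0 ∈ Subgroup.closure (cs.simple '' J))
    (hmax : ∀ u ∈ Subgroup.closure (cs.simple '' J), ℓ u ≤ ℓ v0)
    {u : W} (hu : u ∈ Subgroup.closure (cs.simple '' J)) :
    ℓ (v0 * u) + ℓ u = ℓ v0 := by
  rw [length_eq_ncard_invSet cs (v0 * u), length_eq_ncard_invSet cs u,
    length_eq_ncard_invSet cs v0, invSet_longest_mul cs J hv0 hmax hu,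
    invSet_longest cs J hv0 hmax]
  exact Set.ncard_diff_add_ncard_of_subset (invSet_subset_TJ cs J hu) (Set.toFinite _)

theorem exists_longest [Finite W] :
    ∃ v0 ∈ Subgroup.closure (cs.simple '' J),
      ∀ u ∈ Subgroup.closure (cs.simple '' J), ℓ u ≤ ℓ v0 := by
  have hne : Nonempty {u : W // u ∈ Subgroup.closure (cs.simple '' J)} := ⟨⟨1, one_mem _⟩⟩
  obtain ⟨⟨v0, hv0⟩, hmax⟩ :=
    Finite.exists_max (fun u : {u : W // u ∈ Subgroup.closure (cs.simple '' J)} => ℓ (u : W))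
  exact ⟨v0, hv0, fun u hu => hmax ⟨u, hu⟩⟩

/-! ### Maximal representatives -/

theorem maxRep_struct [Finite W] {a : W} (ha : isMaxRep cs J a) :
    ∃ x v0, isMinRep cs J x ∧ v0 ∈ Subgroup.closure (cs.simple '' J) ∧ a = x * v0 ∧
      (∀ u ∈ Subgroup.closure (cs.simple '' J), ℓ u ≤ ℓ v0) ∧ ℓ a = ℓ x + ℓ v0 := by
  obtain ⟨x, v, hx, hv, rfl⟩ := exists_minRep_decomp cs J a
  have hlen : ℓ (x * v) = ℓ x + ℓ v := minRep_mul_length cs J hx hv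
  refine ⟨x, v, hx, hv, rfl, ?_, hlen⟩
  intro z hz
  have h1 : ℓ (x * v * (v⁻¹ * z)) = ℓ (x * z) := by
    congr 1
    group
  have h2 : ℓ (x * v * (v⁻¹ * z)) ≤ ℓ (x * v) := ha _ (mul_mem (inv_mem hv) hz)
  have h3 : ℓ (x * z) = ℓ x + ℓ z := minRep_mul_length cs J hx hz
  omega

theorem maxRep_mul_length [Finite W] {a u : W} (ha : isMaxRep cs J a)
    (hu : u ∈ Subgroup.closure (cs.simple '' J)) : ℓ (a * u) + ℓ u = ℓ a := by
  obtain ⟨x, v0, hx, hv0, rfl, hmax, hlen⟩ := maxRep_struct cs J ha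
  have h1 : ℓ (x * v0 * u) = ℓ (x * (v0 * u)) := by rw [mul_assoc]
  have h2 : ℓ (x * (v0 * u)) = ℓ x + ℓ (v0 * u) :=
    minRep_mul_length cs J hx (mul_mem hv0 hu)
  have h3 : ℓ (v0 * u) + ℓ u = ℓ v0 := length_longest_mul cs J hv0 hmax hu
  omega

/-! ### Combination lemmas -/

theorem mul_ble_mul {x u v : W} (hx : isMinRep cs J x)
    (hv : v ∈ Subgroup.closure (cs.simple '' J)) (h : ble cs u v) :
    ble cs (x * u) (x * v) := by
  obtain ⟨μ, hμJ, hμred, hμeq⟩ := mem_exists_reduced_wordJ cs J hv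
  obtain ⟨ρ, hρred, hρeq⟩ := cs.exists_reduced_word' x
  obtain ⟨l', hs, _, hp'⟩ := subword_of_ble cs h μ hμred hμeq
  have happ : π (ρ ++ μ) = x * v := by rw [cs.wordProd_append, ← hρeq, hμeq]
  have happred : cs.IsReduced (ρ ++ μ) := by
    unfold CoxeterSystem.IsReduced
    rw [happ, minRep_mul_length cs J hx hv, List.length_append]
    have h1 : ℓ (π ρ) = ρ.length := hρred
    have h2 : ℓ (π μ) = μ.length := hμred
    rw [← hρeq] at h1
    rw [hμeq] at h2
    omega
  have hb := ble_of_subword cs happred (List.Sublist.append (List.Sublist.refl ρ) hs)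
  rwa [cs.wordProd_append, cs.wordProd_append, ← hρeq, hp', hμeq] at hb

theorem le_mul_of_le {y x u : W} (hx : isMinRep cs J x)
    (hu : u ∈ Subgroup.closure (cs.simple '' J)) (h : ble cs y x) :
    ble cs (y * u) (x * u) := by
  obtain ⟨μ, hμJ, hμred, hμeq⟩ := mem_exists_reduced_wordJ cs J hu
  obtain ⟨ρ, hρred, hρeq⟩ := cs.exists_reduced_word' x
  obtain ⟨l', hs, _, hp'⟩ := subword_of_ble cs h ρ hρred hρeq.symm
  have happ : π (ρ ++ μ) = x * u := by rw [cs.wordProd_append, ← hρeq, hμeq]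
  have happred : cs.IsReduced (ρ ++ μ) := by
    unfold CoxeterSystem.IsReduced
    rw [happ, minRep_mul_length cs J hx hu, List.length_append]
    have h1 : ℓ (π ρ) = ρ.length := hρred
    have h2 : ℓ (π μ) = μ.length := hμred
    rw [← hρeq] at h1
    rw [hμeq] at h2
    omega
  have hb := ble_of_subword cs happred (List.Sublist.append hs (List.Sublist.refl μ))
  rwa [cs.wordProd_append, cs.wordProd_append, hp', ← hρeq, hμeq] at hb

theorem maxRep_greatest [Finite W] {a u : W} (ha : isMaxRep cs J a)
    (hu : u ∈ Subgroup.closure (cs.simple '' J)) : ble cs (a * u) a := by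
  obtain ⟨x, v0, hx, hv0, rfl, hmax, hlen⟩ := maxRep_struct cs J ha
  have h1 : ble cs (v0 * u) v0 := ble_longest cs J hv0 hmax (mul_mem hv0 hu)
  have h2 := mul_ble_mul cs J hx hv0 h1
  rwa [← mul_assoc] at h2

/-! ### The key lemma for surjectivity -/

theorem le_min_of_max_le [Finite W] {a b c : W} (ha : isMaxRep cs J a) (hc : isMinRep cs J c)
    (hb : b ∈ Subgroup.closure (cs.simple '' J)) (h : ble cs a (c * b)) :
    ble cs (a * b⁻¹) c := by
  obtain ⟨μ, hμJ, hμred, rfl⟩ := mem_exists_reduced_wordJ cs J hb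
  have hglen : ∀ m, m ≤ μ.length →
      ℓ (a * (π μ)⁻¹ * π (μ.take m)) + (μ.length - m) = ℓ a := by
    intro m hm
    have hsplit : π (μ.take m) * π (μ.drop m) = π μ := by
      rw [← cs.wordProd_append, List.take_append_drop]
    have hz : a * (π μ)⁻¹ * π (μ.take m) = a * (π (μ.drop m))⁻¹ := by
      rw [mul_assoc]
      congr 1
      calc (π μ)⁻¹ * π (μ.take m)
          = (π (μ.take m) * π (μ.drop m))⁻¹ * π (μ.take m) := by rw [hsplit]
        _ = (π (μ.drop m))⁻¹ := by group
    have hmem : (π (μ.drop m))⁻¹ ∈ Subgroup.closure (cs.simple '' J) :=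
      inv_mem (wordJ_mem cs J (fun b hb => hμJ b ((List.drop_sublist m μ).subset hb)))
    have hlenz : ℓ ((π (μ.drop m))⁻¹) = μ.length - m := by
      rw [cs.length_inv]
      have h1 : ℓ (π (μ.drop m)) = (μ.drop m).length := CoxeterSystem.IsReduced.drop hμred m
      rw [h1, List.length_drop]
    have hkey := maxRep_mul_length cs J ha hmem
    rw [hz, ← hlenz]
    exact hkey
  have hhlen : ∀ m, m ≤ μ.length → ℓ (c * π (μ.take m)) = ℓ c + m := by
    intro m hm
    have h1 := minRep_mul_wordProd cs J hc (μ.take m)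
      (fun b hb => hμJ b ((List.take_sublist m μ).subset hb)) (CoxeterSystem.IsReduced.take hμred m)
    rw [h1, List.length_take, min_eq_left hm]
  have key : ∀ d, d ≤ μ.length →
      ble cs (a * (π μ)⁻¹ * π (μ.take (μ.length - d))) (c * π (μ.take (μ.length - d))) := by
    intro d
    induction d with
    | zero =>
      intro _
      rw [Nat.sub_zero, List.take_length]
      have h1 : a * (π μ)⁻¹ * π μ = a := by group
      rw [h1]
      exact h
    | succ d ih =>
      intro hd1
      have ihs := ih (by omega)
      have hkk : μ.length - d = (μ.length - (d+1)) + 1 := by omega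
      have hk'lt : μ.length - (d+1) < μ.length := by omega
      have htake : μ.take ((μ.length - (d+1)) + 1)
          = μ.take (μ.length - (d+1)) ++ [μ[μ.length - (d+1)]'hk'lt] := by
        rw [List.take_succ, List.getElem?_eq_getElem hk'lt]
        rfl
      rw [hkk, htake, cs.wordProd_append, cs.wordProd_singleton, ← mul_assoc, ← mul_assoc]
        at ihs
      have hA1 := hglen (μ.length - (d+1)) (by omega)
      have hA2 := hglen ((μ.length - (d+1)) + 1) (by omega)
      rw [htake, cs.wordProd_append, cs.wordProd_singleton, ← mul_assoc] at hA2
      have hB1 := hhlen (μ.length - (d+1)) (by omega)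
      have hB2 := hhlen ((μ.length - (d+1)) + 1) (by omega)
      rw [htake, cs.wordProd_append, cs.wordProd_singleton, ← mul_assoc] at hB2
      have hgdesc : ℓ ((a * (π μ)⁻¹ * π (μ.take (μ.length - (d+1)))
          * σ (μ[μ.length - (d+1)]'hk'lt)) * σ (μ[μ.length - (d+1)]'hk'lt))
          < ℓ (a * (π μ)⁻¹ * π (μ.take (μ.length - (d+1)))
          * σ (μ[μ.length - (d+1)]'hk'lt)) := by
        rw [mul_assoc _ _ (σ (μ[μ.length - (d+1)]'hk'lt)), cs.simple_mul_simple_self, mul_one]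
        omega
      have hhdesc : ℓ ((c * π (μ.take (μ.length - (d+1))) * σ (μ[μ.length - (d+1)]'hk'lt))
          * σ (μ[μ.length - (d+1)]'hk'lt))
          < ℓ (c * π (μ.take (μ.length - (d+1))) * σ (μ[μ.length - (d+1)]'hk'lt)) := by
        rw [mul_assoc _ _ (σ (μ[μ.length - (d+1)]'hk'lt)), cs.simple_mul_simple_self, mul_one]
        omega
      have hres := ble_lifting_ii cs ihs (μ[μ.length - (d+1)]'hk'lt) hgdesc hhdesc
      rwa [mul_assoc _ _ (σ (μ[μ.length - (d+1)]'hk'lt)), cs.simple_mul_simple_self, mul_one,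
        mul_assoc _ _ (σ (μ[μ.length - (d+1)]'hk'lt)), cs.simple_mul_simple_self, mul_one]
        at hres
  have hfin := key μ.length le_rfl
  rw [Nat.sub_self, List.take_zero, cs.wordProd_nil, mul_one, mul_one] at hfin
  exact hfin

/-! ### Demazure products -/

theorem demazure (w' : W) : ∀ μ : List B, (∀ b ∈ μ, b ∈ J) → cs.IsReduced μ →
    ∃ u₁ ∈ Subgroup.closure (cs.simple '' J),
      ℓ (w' * u₁) = ℓ w' + ℓ u₁ ∧ ble cs u₁ (π μ) ∧ ble cs (w' * π μ) (w' * u₁) := by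
  intro μ
  induction μ using List.reverseRecOn with
  | nil =>
    intro _ _
    refine ⟨1, one_mem _, by simp, ?_, ?_⟩
    · rw [cs.wordProd_nil]
      exact ble_refl cs 1
    · rw [cs.wordProd_nil]
      exact ble_refl cs (w' * 1)
  | append_singleton ν j ih =>
    intro hJ hred
    have hνJ : ∀ b ∈ ν, b ∈ J := fun b hb => hJ b (by simp [hb])
    have hjJ : j ∈ J := hJ j (by simp)
    have hνred : cs.IsReduced ν := by
      have := CoxeterSystem.IsReduced.take hred (j := ν.length)
      rwa [List.take_left] at this
    obtain ⟨u₁, hu₁, hadd, hb1, hb2⟩ := ih hνJ hνred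
    have hπ : π (ν ++ [j]) = π ν * σ j := by
      rw [cs.wordProd_append, cs.wordProd_singleton]
    have hlenν : ℓ (π ν) = ν.length := hνred
    have hlenμ : ℓ (π ν * σ j) = ν.length + 1 := by
      have h1 : ℓ (π (ν ++ [j])) = (ν ++ [j]).length := hred
      rwa [hπ, List.length_append, List.length_singleton] at h1
    have hascν : ℓ (π ν) < ℓ (π ν * σ j) := by omega
    rcases cs.length_mul_simple (w' * u₁) j with hup | hdn
    · refine ⟨u₁ * σ j, mul_mem hu₁ (Subgroup.subset_closure ⟨j, hjJ, rfl⟩), ?_, ?_, ?_⟩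
      · have hu₁asc : ℓ (u₁ * σ j) = ℓ u₁ + 1 := by
          rcases cs.length_mul_simple u₁ j with h1 | h1
          · exact h1
          · exfalso
            have h2 : ℓ (w' * (u₁ * σ j)) ≤ ℓ w' + ℓ (u₁ * σ j) := cs.length_mul_le _ _
            rw [← mul_assoc] at h2
            omega
        rw [← mul_assoc, hup, hadd, hu₁asc]
        omega
      · rw [hπ]
        exact ble_mul_simple_right cs hb1 j hascν
      · rw [hπ, ← mul_assoc, ← mul_assoc]
        exact ble_mul_simple_right cs hb2 j (by omega)
    · refine ⟨u₁, hu₁, hadd, ?_, ?_⟩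
      · refine hb1.trans ?_
        rw [hπ]
        exact ble_of_bstep cs ⟨σ j, cs.isReflection_simple j, rfl, hascν⟩
      · rw [hπ, ← mul_assoc]
        exact ble_lifting_i cs hb2 j (by omega)

end Parabolic

end RietschAux

open RietschAux in
/-- The map `h : Q_J → Q'_J`, `(x,y) ↦ (max(yW_J), y⁻¹ max(yW_J), x)` is an
order-preserving bijection between `(Q_J, ⪯)` and `(Q'_J, ≤)`. -/
theorem h_order_preserving_bijection {B W : Type*} [Group W] [Finite W]
    {M : CoxeterMatrix B} (cs : CoxeterSystem M W) (J : Set B)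
    (h : W × W → W × W × W)
    (hh : ∀ p : W × W,
      isGreatestB cs {g | ∃ u ∈ Subgroup.closure (cs.simple '' J), g = p.2 * u} (h p).1 ∧
      (h p).2.1 = p.2⁻¹ * (h p).1 ∧ (h p).2.2 = p.1) :
    Set.BijOn h (QJset cs J) (Q'Jset cs J) ∧
    ∀ p ∈ QJset cs J, ∀ q ∈ QJset cs J, preceq cs J p q → leQ' cs J (h p) (h q) := by
  classical
  -- maxRep property of (h p).1 for any p
  have hmax1 : ∀ p : W × W, isMaxRep cs J (h p).1 := by
    intro p
    obtain ⟨⟨⟨u₀, hu₀, hadef⟩, hgr⟩, _, _⟩ := hh p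
    intro v hv
    have hz : (h p).1 * v ∈ {g | ∃ u ∈ Subgroup.closure (cs.simple '' J), g = p.2 * u} :=
      ⟨u₀ * v, mul_mem hu₀ hv, by rw [hadef, mul_assoc]⟩
    exact ble_length_le cs ((bruhatLE_iff_ble cs).mp (hgr _ hz))
  constructor
  · refine ⟨?_, ?_, ?_⟩
    · -- MapsTo
      intro p hp
      obtain ⟨hpmin, hple⟩ := hp
      obtain ⟨⟨⟨u₀, hu₀, hadef⟩, hgr⟩, hbdef, hcdef⟩ := hh p
      have hsimp : p.2⁻¹ * (p.2 * u₀) = u₀ := by group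
      refine ⟨hmax1 p, ?_, ?_, ?_⟩
      · rw [hbdef, hadef, hsimp]
        exact hu₀
      · rw [hcdef]
        exact hpmin
      · rw [hcdef, hbdef, hadef, hsimp]
        rw [show bruhatLE cs (p.2 * u₀) (p.1 * u₀) ↔ ble cs (p.2 * u₀) (p.1 * u₀) from
          bruhatLE_iff_ble cs]
        exact le_mul_of_le cs J hpmin hu₀ ((bruhatLE_iff_ble cs).mp hple)
    · -- InjOn
      intro p _ q _ heq
      obtain ⟨_, hbp, hcp⟩ := hh p
      obtain ⟨_, hbq, hcq⟩ := hh q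
      have h1 : p.1 = q.1 := by rw [← hcp, ← hcq, heq]
      have h2 : p.2 = q.2 := by
        have hp2 : p.2 = (h p).1 * ((h p).2.1)⁻¹ := by rw [hbp]; group
        have hq2 : q.2 = (h q).1 * ((h q).2.1)⁻¹ := by rw [hbq]; group
        rw [hp2, hq2, heq]
      exact Prod.ext h1 h2
    · -- SurjOn
      rintro ⟨a, b, c⟩ ⟨hamax, hbWJ, hcmin, habc⟩
      refine ⟨(c, a * b⁻¹), ⟨hcmin, ?_⟩, ?_⟩
      · rw [show bruhatLE cs (c, a * b⁻¹).2 (c, a * b⁻¹).1 ↔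
          ble cs (a * b⁻¹) c from bruhatLE_iff_ble cs]
        exact le_min_of_max_le cs J hamax hcmin hbWJ ((bruhatLE_iff_ble cs).mp habc)
      · obtain ⟨⟨hmem2, hgr2⟩, hb2, hc2⟩ := hh (c, a * b⁻¹)
        have ha_in : a ∈ {g | ∃ u ∈ Subgroup.closure (cs.simple '' J),
            g = (c, a * b⁻¹).2 * u} := ⟨b, hbWJ, by show a = a * b⁻¹ * b; group⟩
        have h1 : ble cs a (h (c, a * b⁻¹)).1 := (bruhatLE_iff_ble cs).mp (hgr2 a ha_in)
        obtain ⟨u', hu', he⟩ := hmem2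
        have he' : (h (c, a * b⁻¹)).1 = a * (b⁻¹ * u') := by
          rw [he]; show (a * b⁻¹) * u' = a * (b⁻¹ * u'); group
        have h2 : ble cs (h (c, a * b⁻¹)).1 a := by
          rw [he']
          exact maxRep_greatest cs J hamax (mul_mem (inv_mem hbWJ) hu')
        have heq1 : (h (c, a * b⁻¹)).1 = a := ble_antisymm cs h2 h1
        have heq2 : (h (c, a * b⁻¹)).2.1 = b := by
          rw [hb2, heq1]
          show (a * b⁻¹)⁻¹ * a = b
          group
        exact Prod.ext heq1 (Prod.ext heq2 hc2)
  · -- order preservation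
    intro p hp q hq hpre
    obtain ⟨hp1min, hp2le⟩ := hp
    obtain ⟨hq1min, _⟩ := hq
    obtain ⟨u, huWJ, hxu, hyu⟩ := hpre
    obtain ⟨⟨⟨u₀, hu₀, ha'def⟩, hgr'⟩, hb'def, hc'def⟩ := hh p
    obtain ⟨_, hbqdef, hcqdef⟩ := hh q
    obtain ⟨X, v', hXmin, hv'WJ, ha'xv, hv'max, _⟩ := maxRep_struct cs J (hmax1 p)
    have hw'WJ : v' * u₀⁻¹ ∈ Subgroup.closure (cs.simple '' J) := mul_mem hv'WJ (inv_mem hu₀)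
    have hp2eq : p.2 = X * (v' * u₀⁻¹) := by
      have hkey : p.2 * u₀ = X * v' := by rw [← ha'def, ha'xv]
      calc p.2 = (p.2 * u₀) * u₀⁻¹ := by group
        _ = (X * v') * u₀⁻¹ := by rw [hkey]
        _ = X * (v' * u₀⁻¹) := by group
    have hb'u₀ : (h p).2.1 = u₀ := by rw [hb'def, ha'def]; group
    obtain ⟨μu, hμuJ, hμured, hμueq⟩ := mem_exists_reduced_wordJ cs J huWJ
    obtain ⟨u₁, hu₁WJ, hdem_len, hdem_le_u, hdem_ge⟩ :=
      demazure cs J (v' * u₀⁻¹) μu hμuJ hμured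
    rw [hμueq] at hdem_le_u hdem_ge
    have hv'invWJ : v'⁻¹ ∈ Subgroup.closure (cs.simple '' J) := inv_mem hv'WJ
    have hv'invmax : ∀ z ∈ Subgroup.closure (cs.simple '' J), cs.length z ≤ cs.length v'⁻¹ := by
      intro z hz
      rw [cs.length_inv]
      exact hv'max z hz
    have hwu₁WJ : (v' * u₀⁻¹) * u₁ ∈ Subgroup.closure (cs.simple '' J) :=
      mul_mem hw'WJ hu₁WJ
    refine ⟨u₁, hu₁WJ, u₁⁻¹ * (h p).2.1, ?_, by group, ?_, ?_, ?_, ?_⟩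
    · rw [hb'u₀]
      exact mul_mem (inv_mem hu₁WJ) hu₀
    · -- lengths add
      rw [hb'u₀]
      have e2 : cs.length (u₁⁻¹ * u₀) = cs.length (v'⁻¹ * ((v' * u₀⁻¹) * u₁)) := by
        rw [← cs.length_inv (u₁⁻¹ * u₀)]
        congr 1
        group
      have e3 := length_longest_mul cs J hv'invWJ hv'invmax hwu₁WJ
      have e4 : cs.length u₀ = cs.length (v'⁻¹ * (v' * u₀⁻¹)) := by
        rw [← cs.length_inv u₀]
        congr 1
        group
      have e5 := length_longest_mul cs J hv'invWJ hv'invmax hw'WJ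
      omega
    · -- first inequality : y ≤ y' u₁
      have hL : (h q).1 * ((h q).2.1)⁻¹ = q.2 := by rw [hbqdef]; group
      have hR : (h p).1 * (u₁⁻¹ * (h p).2.1)⁻¹ = p.2 * u₁ := by rw [hb'def]; group
      rw [hL, hR, show bruhatLE cs q.2 (p.2 * u₁) ↔ ble cs q.2 (p.2 * u₁) from
        bruhatLE_iff_ble cs]
      have hstep : ble cs (p.2 * u) (p.2 * u₁) := by
        have e6 : X * (v' * u₀⁻¹ * u) = p.2 * u := by rw [hp2eq]; group
        have e7 : X * (v' * u₀⁻¹ * u₁) = p.2 * u₁ := by rw [hp2eq]; group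
        have h0 := mul_ble_mul cs J hXmin hwu₁WJ hdem_ge
        rwa [e6, e7] at h0
      exact ((bruhatLE_iff_ble cs).mp hyu).trans hstep
    · -- second : y' u₁ ≤ x' u₁
      have hR : (h p).1 * (u₁⁻¹ * (h p).2.1)⁻¹ = p.2 * u₁ := by rw [hb'def]; group
      rw [hR, hc'def, show bruhatLE cs (p.2 * u₁) (p.1 * u₁) ↔
        ble cs (p.2 * u₁) (p.1 * u₁) from bruhatLE_iff_ble cs]
      exact le_mul_of_le cs J hp1min hu₁WJ ((bruhatLE_iff_ble cs).mp hp2le)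
    · -- third : x' u₁ ≤ x
      rw [hc'def, hcqdef, show bruhatLE cs (p.1 * u₁) q.1 ↔
        ble cs (p.1 * u₁) q.1 from bruhatLE_iff_ble cs]
      have h1 : ble cs (p.1 * u₁) (p.1 * u) := mul_ble_mul cs J hp1min huWJ hdem_le_u
      exact h1.trans ((bruhatLE_iff_ble cs).mp hxu)
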